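/- Let g(H) = (1/2)·‖Y - HHᵀ‖_F² for a fixed symmetric matrix Y, and h(H) = (α/4)·‖H‖_F⁴ + (σ/2)·‖H‖_F² with α = 6 and σ = 2‖Y‖₂ (spectral norm). Then the second directional derivative satisfies ∇²g(H)[U,U] ≤ ∇²h(H)[U,U] for all H, U ∈ ℝ^{r×n}; i.e., g is 1-smooth relative to the kernel h. -/

import Mathlib

open Matrix BigOperators
open scoped RealInnerProductSpace

section Aux

lemma poly4_deriv_aux18 (a b c d e : ℝ) (x : ℝ) :
    HasDerivAt (fun t : ℝ => a + b*t + c*t^2 + d*t^3 + e*t^4)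
      (b + 2*c*x + 3*d*x^2 + 4*e*x^3) x := by
  have h1 : HasDerivAt (fun t : ℝ => a + b*t + c*t^2 + d*t^3 + e*t^4)
      (0 + b*1 + c*(2*x^1) + d*(3*x^2) + e*(4*x^3)) x :=
    ((((hasDerivAt_const x a).add ((hasDerivAt_id x).const_mul b)).add
      ((hasDerivAt_pow 2 x).const_mul c)).add ((hasDerivAt_pow 3 x).const_mul d)).add
      ((hasDerivAt_pow 4 x).const_mul e)
  convert h1 using 1
  ring

lemma poly4_iteratedDeriv2_aux18 (a b c d e : ℝ) :
    iteratedDeriv 2 (fun t : ℝ => a + b*t + c*t^2 + d*t^3 + e*t^4) 0 = 2*c := by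
  have hd : deriv (fun t : ℝ => a + b*t + c*t^2 + d*t^3 + e*t^4)
      = fun x => b + (2*c)*x + (3*d)*x^2 + (4*e)*x^3 + 0*x^4 := by
    funext x
    rw [(poly4_deriv_aux18 a b c d e x).deriv]; ring
  rw [show (2:ℕ) = 1 + 1 from rfl, iteratedDeriv_succ, iteratedDeriv_one, hd,
    (poly4_deriv_aux18 b (2*c) (3*d) (4*e) 0 0).deriv]
  ring

lemma swap3_aux18 {α β γ : Type*} [Fintype α] [Fintype β] [Fintype γ]
    (f : α → β → γ → ℝ) :
    ∑ i, ∑ j, ∑ l, f i j l = ∑ l, ∑ i, ∑ j, f i j l :=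
  calc ∑ i, ∑ j, ∑ l, f i j l
      = ∑ i, ∑ l, ∑ j, f i j l :=
        Finset.sum_congr rfl fun _ _ => Finset.sum_comm
    _ = ∑ l, ∑ i, ∑ j, f i j l := Finset.sum_comm

lemma swap4_aux18 {α β γ δ : Type*} [Fintype α] [Fintype β] [Fintype γ] [Fintype δ]
    (f : α → β → γ → δ → ℝ) :
    ∑ i, ∑ j, ∑ k, ∑ l, f i j k l = ∑ k, ∑ l, ∑ i, ∑ j, f i j k l :=
  calc ∑ i, ∑ j, ∑ k, ∑ l, f i j k l
      = ∑ i, ∑ k, ∑ j, ∑ l, f i j k l :=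
        Finset.sum_congr rfl fun _ _ => Finset.sum_comm
    _ = ∑ k, ∑ i, ∑ j, ∑ l, f i j k l := Finset.sum_comm
    _ = ∑ k, ∑ i, ∑ l, ∑ j, f i j k l :=
        Finset.sum_congr rfl fun _ _ => Finset.sum_congr rfl fun _ _ => Finset.sum_comm
    _ = ∑ k, ∑ l, ∑ i, ∑ j, f i j k l :=
        Finset.sum_congr rfl fun _ _ => Finset.sum_comm

/-- Frobenius submultiplicativity for `A * Bᵀ`. -/
lemma frob_mul_le_aux18 {r n : ℕ} (A B : Matrix (Fin r) (Fin n) ℝ) :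
    ∑ i, ∑ j, ((A * Bᵀ) i j)^2 ≤ (∑ i, ∑ j, (A i j)^2) * (∑ i, ∑ j, (B i j)^2) := by
  have h1 : ∀ (i j : Fin r), ((A * Bᵀ) i j)^2
      ≤ (∑ k, (A i k)^2) * (∑ k, (B j k)^2) := by
    intro i j
    simpa [mul_apply] using Finset.sum_mul_sq_le_sq_mul_sq Finset.univ (A i) (B j)
  calc ∑ i, ∑ j, ((A * Bᵀ) i j)^2
      ≤ ∑ i, ∑ j, (∑ k, (A i k)^2) * (∑ k, (B j k)^2) :=
        Finset.sum_le_sum fun i _ => Finset.sum_le_sum fun j _ => h1 i j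
    _ = (∑ i, ∑ j, (A i j)^2) * (∑ i, ∑ j, (B i j)^2) := by
        rw [← Finset.sum_mul_sum]

lemma gram_inner_eq_aux18 {r n : ℕ} (A B : Matrix (Fin r) (Fin n) ℝ) :
    ∑ i, ∑ j, (A * Aᵀ) i j * (B * Bᵀ) i j = ∑ k, ∑ l, ((Aᵀ * B) k l)^2 := by
  have L : ∀ i j : Fin r, (A * Aᵀ) i j * (B * Bᵀ) i j
      = ∑ k, ∑ l, (A i k * A j k) * (B i l * B j l) := by
    intro i j
    simp only [mul_apply, transpose_apply]
    rw [Finset.sum_mul_sum]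
  have Rr : ∀ k l : Fin n, ((Aᵀ * B) k l)^2
      = ∑ i, ∑ j, (A i k * B i l) * (A j k * B j l) := by
    intro k l
    simp only [mul_apply, transpose_apply, sq]
    rw [Finset.sum_mul_sum]
  simp only [L, Rr]
  rw [swap4_aux18]
  exact Finset.sum_congr rfl fun k _ => Finset.sum_congr rfl fun l _ =>
    Finset.sum_congr rfl fun i _ => Finset.sum_congr rfl fun j _ => by ring

lemma spec_bound_aux18 {r n : ℕ} (Y : Matrix (Fin r) (Fin r) ℝ)
    (U : Matrix (Fin r) (Fin n) ℝ) :
    -∑ i, ∑ j, Y i j * (U * Uᵀ) i j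
      ≤ ‖Matrix.toEuclideanCLM (𝕜 := ℝ) Y‖ * ∑ i, ∑ j, (U i j)^2 := by
  set A := Matrix.toEuclideanCLM (𝕜 := ℝ) Y with hA
  have key : ∀ l : Fin n, -(∑ i, ∑ j, U i l * (Y i j * U j l)) ≤ ‖A‖ * ∑ i, (U i l)^2 := by
    intro l
    set u : EuclideanSpace ℝ (Fin r) := (WithLp.equiv 2 _).symm (fun i => U i l) with hu
    have h1 : ⟪u, A u⟫ = ∑ i, ∑ j, U i l * (Y i j * U j l) := by
      rw [hA, hu, WithLp.equiv_symm_apply, Matrix.toEuclideanCLM_toLp]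
      simp [PiLp.inner_apply, RCLike.inner_apply, Matrix.toLin'_apply, Matrix.mulVec,
        dotProduct, Finset.mul_sum]
      exact Finset.sum_congr rfl fun i _ => by
        rw [Finset.sum_mul]; exact Finset.sum_congr rfl fun j _ => by ring
    have h2 : ‖u‖^2 = ∑ i, (U i l)^2 := by
      rw [← real_inner_self_eq_norm_sq]
      rw [hu, WithLp.equiv_symm_apply, PiLp.inner_apply]; simp [sq]
    have h3 : -⟪u, A u⟫ ≤ ‖A‖ * ‖u‖^2 := by
      have h4 := abs_real_inner_le_norm u (A u)
      have h5 := A.le_opNorm u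
      have h6 : |⟪u, A u⟫| ≤ ‖A‖ * ‖u‖^2 := by
        nlinarith [norm_nonneg u, norm_nonneg (A u)]
      linarith [neg_abs_le (⟪u, A u⟫)]
    rw [← h1, ← h2]; exact h3
  have reorder : ∑ i, ∑ j, Y i j * (U * Uᵀ) i j
      = ∑ l : Fin n, ∑ i, ∑ j, U i l * (Y i j * U j l) := by
    simp only [mul_apply, transpose_apply, Finset.mul_sum]
    rw [swap3_aux18]
    exact Finset.sum_congr rfl fun l _ => Finset.sum_congr rfl fun i _ =>
      Finset.sum_congr rfl fun j _ => by ring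
  calc -∑ i, ∑ j, Y i j * (U * Uᵀ) i j
      = ∑ l : Fin n, -(∑ i, ∑ j, U i l * (Y i j * U j l)) := by
        rw [reorder]; exact (Finset.sum_neg_distrib _).symm
    _ ≤ ∑ l : Fin n, ‖A‖ * ∑ i, (U i l)^2 :=
        Finset.sum_le_sum fun l _ => key l
    _ = ‖A‖ * ∑ i, ∑ j, (U i j)^2 := by
        rw [← Finset.mul_sum, Finset.sum_comm]

end Aux

theorem stmt18 {r n : ℕ} (Y : Matrix (Fin r) (Fin r) ℝ) (hY : Y.IsSymm)
    (g h : Matrix (Fin r) (Fin n) ℝ → ℝ)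
    (hg : ∀ H, g H = (1 / 2) * ∑ i, ∑ j, ((Y - H * Hᵀ) i j) ^ 2)
    (hh : ∀ H, h H = (6 / 4) * (∑ i, ∑ j, (H i j) ^ 2) ^ 2
        + ((2 * ‖Matrix.toEuclideanCLM (𝕜 := ℝ) Y‖) / 2) * ∑ i, ∑ j, (H i j) ^ 2)
    (H U : Matrix (Fin r) (Fin n) ℝ) :
    iteratedDeriv 2 (fun t : ℝ => g (H + t • U)) 0
      ≤ iteratedDeriv 2 (fun t : ℝ => h (H + t • U)) 0 := by
  set R : Matrix (Fin r) (Fin r) ℝ := Y - H * Hᵀ with hR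
  set P : Matrix (Fin r) (Fin r) ℝ := H * Uᵀ + U * Hᵀ with hP
  set Q : Matrix (Fin r) (Fin r) ℝ := U * Uᵀ with hQ
  set cY : ℝ := ‖Matrix.toEuclideanCLM (𝕜 := ℝ) Y‖ with hcY
  set s0 : ℝ := ∑ i, ∑ j, (H i j)^2 with hs0
  set s2 : ℝ := ∑ i, ∑ j, (U i j)^2 with hs2
  set b : ℝ := ∑ i, ∑ j, H i j * U i j with hb
  -- g along the line
  have hgline : (fun t : ℝ => g (H + t • U))
      = fun t => ((1:ℝ)/2) * ∑ i, ∑ j, (R i j)^2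
        + (((1:ℝ)/2) * ∑ i, ∑ j, (-2 * R i j * P i j)) * t
        + (((1:ℝ)/2) * ∑ i, ∑ j, ((P i j)^2 - 2 * R i j * Q i j)) * t^2
        + (((1:ℝ)/2) * ∑ i, ∑ j, (2 * P i j * Q i j)) * t^3
        + (((1:ℝ)/2) * ∑ i, ∑ j, (Q i j)^2) * t^4 := by
    funext t
    rw [hg]
    have key : (H + t • U) * (H + t • U)ᵀ
        = H * Hᵀ + t • P + (t^2) • Q := by
      rw [hP, hQ, transpose_add, transpose_smul, Matrix.add_mul, Matrix.mul_add,
        Matrix.mul_add]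
      simp only [Matrix.smul_mul, Matrix.mul_smul, smul_smul, smul_add, sq]
      abel
    have hent : ∀ i j : Fin r, ((Y - (H + t • U) * (H + t • U)ᵀ) i j)^2
        = (R i j)^2 + (-2 * R i j * P i j) * t
          + ((P i j)^2 - 2 * R i j * Q i j) * t^2
          + (2 * P i j * Q i j) * t^3 + (Q i j)^2 * t^4 := by
      intro i j
      rw [key]
      simp only [hR, Matrix.sub_apply, Matrix.add_apply, Matrix.smul_apply, smul_eq_mul]
      ring
    simp only [hent]
    have split : ∑ i : Fin r, ∑ j : Fin r,
        ((R i j)^2 + (-2 * R i j * P i j) * t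
          + ((P i j)^2 - 2 * R i j * Q i j) * t^2
          + (2 * P i j * Q i j) * t^3 + (Q i j)^2 * t^4)
        = (∑ i, ∑ j, (R i j)^2) + (∑ i, ∑ j, (-2 * R i j * P i j)) * t
          + (∑ i, ∑ j, ((P i j)^2 - 2 * R i j * Q i j)) * t^2
          + (∑ i, ∑ j, (2 * P i j * Q i j)) * t^3
          + (∑ i, ∑ j, (Q i j)^2) * t^4 := by
      simp [Finset.sum_add_distrib, Finset.sum_sub_distrib, Finset.sum_mul, sub_mul]
    rw [split]
    ring
  -- h along the line
  have hhline : (fun t : ℝ => h (H + t • U))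
      = fun t => ((6:ℝ)/4 * s0^2 + (2*cY)/2 * s0)
        + ((6:ℝ)/4 * (2*s0*(2*b)) + (2*cY)/2 * (2*b)) * t
        + ((6:ℝ)/4 * (2*s0*s2 + (2*b)^2) + (2*cY)/2 * s2) * t^2
        + ((6:ℝ)/4 * (2*(2*b)*s2)) * t^3
        + ((6:ℝ)/4 * s2^2) * t^4 := by
    funext t
    rw [hh]
    have hent : ∀ (i : Fin r) (j : Fin n), ((H + t • U) i j)^2
        = (H i j)^2 + (2 * (H i j * U i j)) * t + (U i j)^2 * t^2 := by
      intro i j; simp only [Matrix.add_apply, Matrix.smul_apply, smul_eq_mul]; ring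
    have hsum : ∑ i, ∑ j, ((H + t • U) i j)^2 = s0 + (2*b)*t + s2*t^2 := by
      simp only [hent]
      have split : ∑ i : Fin r, ∑ j : Fin n,
          ((H i j)^2 + (2 * (H i j * U i j)) * t + (U i j)^2 * t^2)
          = (∑ i, ∑ j, (H i j)^2) + (∑ i, ∑ j, 2 * (H i j * U i j)) * t
            + (∑ i, ∑ j, (U i j)^2) * t^2 := by
        simp [Finset.sum_add_distrib, Finset.sum_mul]
      rw [split, hs0, hs2, hb]
      have h2b : ∑ i : Fin r, ∑ j : Fin n, 2 * (H i j * U i j)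
          = 2 * ∑ i : Fin r, ∑ j : Fin n, H i j * U i j := by
        simp [Finset.mul_sum]
      rw [h2b]
    rw [hsum]
    ring
  rw [hgline, hhline, poly4_iteratedDeriv2_aux18, poly4_iteratedDeriv2_aux18]
  -- the core inequality
  have core : ∑ i, ∑ j, ((P i j)^2 - 2 * R i j * Q i j)
      ≤ 6*s0*s2 + 12*b^2 + 2*cY*s2 := by
    have split : ∑ i, ∑ j, ((P i j)^2 - 2 * R i j * Q i j)
        = (∑ i, ∑ j, (P i j)^2) - 2 * (∑ i, ∑ j, Y i j * Q i j)
          + 2 * (∑ i, ∑ j, (H * Hᵀ) i j * Q i j) := by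
      have e : ∀ i j : Fin r, (P i j)^2 - 2 * (Y i j - (H * Hᵀ) i j) * Q i j
          = (P i j)^2 - 2 * (Y i j * Q i j) + 2 * ((H * Hᵀ) i j * Q i j) :=
        fun i j => by ring
      simp only [hR, Matrix.sub_apply]
      simp only [e]
      simp only [Finset.sum_add_distrib, Finset.sum_sub_distrib, ← Finset.mul_sum]
    -- bound ∑ P²
    have e1 : ∑ i, ∑ j, ((H * Uᵀ) i j)^2 ≤ s0 * s2 := frob_mul_le_aux18 H U
    have e2 : ∑ i, ∑ j, ((U * Hᵀ) i j)^2 ≤ s2 * s0 := frob_mul_le_aux18 U H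
    have e3 : ∑ i, ∑ j, (P i j)^2
        ≤ 2 * (∑ i, ∑ j, ((H * Uᵀ) i j)^2) + 2 * (∑ i, ∑ j, ((U * Hᵀ) i j)^2) := by
      have hij : ∀ i j : Fin r, (P i j)^2
          ≤ 2 * ((H * Uᵀ) i j)^2 + 2 * ((U * Hᵀ) i j)^2 := by
        intro i j
        rw [hP]
        simp only [Matrix.add_apply]
        nlinarith [sq_nonneg ((H * Uᵀ) i j - (U * Hᵀ) i j)]
      calc ∑ i, ∑ j, (P i j)^2
          ≤ ∑ i, ∑ j, (2 * ((H * Uᵀ) i j)^2 + 2 * ((U * Hᵀ) i j)^2) :=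
            Finset.sum_le_sum fun i _ => Finset.sum_le_sum fun j _ => hij i j
        _ = 2 * (∑ i, ∑ j, ((H * Uᵀ) i j)^2) + 2 * (∑ i, ∑ j, ((U * Hᵀ) i j)^2) := by
            simp [Finset.sum_add_distrib, Finset.mul_sum]
    -- bound ∑ (HHᵀ)(UUᵀ)
    have e4 : ∑ i, ∑ j, (H * Hᵀ) i j * Q i j ≤ s0 * s2 := by
      rw [hQ, gram_inner_eq_aux18 H U]
      have g2 := frob_mul_le_aux18 Hᵀ Uᵀ
      rw [transpose_transpose] at g2
      have ht1 : ∑ k, ∑ l, (Hᵀ k l)^2 = s0 := by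
        simp only [transpose_apply]; rw [hs0]; exact Finset.sum_comm
      have ht2 : ∑ k, ∑ l, (Uᵀ k l)^2 = s2 := by
        simp only [transpose_apply]; rw [hs2]; exact Finset.sum_comm
      rw [ht1, ht2] at g2
      exact g2
    -- bound the Y term
    have e5 : -∑ i, ∑ j, Y i j * Q i j ≤ cY * s2 := by
      rw [hQ, hcY, hs2]; exact spec_bound_aux18 Y U
    have hb2 : (0:ℝ) ≤ b^2 := sq_nonneg b
    rw [split]
    linarith
  nlinarith [core]
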